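/- For every tree T on n ≥ 2 vertices, I_d(T) ≥ 1 + log₂(√(n−1)), with equality if and only if T is the star K_{1,n−1}. -/

import Mathlib

open Finset

/-- Degree-based entropy: `I_d(G) = log₂(2m) - (1/(2m)) ∑_v d(v) log₂ d(v)`. -/
noncomputable def degEntropy {V : Type} [Fintype V] (G : SimpleGraph V) : ℝ :=
  Real.logb 2 (2 * (G.edgeSet.ncard : ℝ)) -
    (1 / (2 * (G.edgeSet.ncard : ℝ))) *
      ∑ v : V, ((G.neighborSet v).ncard : ℝ) * Real.logb 2 ((G.neighborSet v).ncard)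


section Helpers

lemma chord_le {M x : ℝ} (h1 : 1 ≤ x) (hM : x ≤ M) :
    (M - 1) * (x * Real.log x) ≤ (x - 1) * (M * Real.log M) := by
  rcases eq_or_lt_of_le (h1.trans hM) with hM1 | hM1
  · have hx : x = 1 := le_antisymm (hM.trans hM1.symm.le) h1
    rw [hx, ← hM1]
  · have hd : (0:ℝ) < M - 1 := by linarith
    set a : ℝ := (M - x) / (M - 1) with ha_def
    set b : ℝ := (x - 1) / (M - 1) with hb_def
    have ha : 0 ≤ a := div_nonneg (by linarith) hd.le
    have hb : 0 ≤ b := div_nonneg (by linarith) hd.le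
    have hab : a + b = 1 := by rw [ha_def, hb_def]; field_simp; ring
    have hx : a • (1:ℝ) + b • M = x := by
      have h' : (M - x) / (M-1) * 1 + (x-1)/(M-1) * M = x := by
        rw [div_mul_eq_mul_div, div_mul_eq_mul_div, ← add_div, div_eq_iff hd.ne']; ring
      simpa [smul_eq_mul, ha_def, hb_def] using h'
    have hcvx := Real.convexOn_mul_log.2 (Set.mem_Ici.mpr zero_le_one)
      (Set.mem_Ici.mpr (by linarith : (0:ℝ) ≤ M)) ha hb hab
    rw [hx] at hcvx
    simp only [smul_eq_mul, Real.log_one, mul_zero, mul_one, zero_add] at hcvx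
    have : (M - 1) * (x * Real.log x) ≤ (M - 1) * (b * (M * Real.log M)) := by
      nlinarith [hcvx]
    calc (M - 1) * (x * Real.log x) ≤ (M - 1) * (b * (M * Real.log M)) := this
      _ = (x - 1) * (M * Real.log M) := by rw [hb_def]; field_simp; try ring

lemma chord_lt {M x : ℝ} (h1 : 1 < x) (hM : x < M) :
    (M - 1) * (x * Real.log x) < (x - 1) * (M * Real.log M) := by
  have hd : (0:ℝ) < M - 1 := by linarith
  set a : ℝ := (M - x) / (M - 1) with ha_def
  set b : ℝ := (x - 1) / (M - 1) with hb_def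
  have ha : 0 < a := div_pos (by linarith) hd
  have hb : 0 < b := div_pos (by linarith) hd
  have hab : a + b = 1 := by rw [ha_def, hb_def]; field_simp; ring
  have hx : a • (1:ℝ) + b • M = x := by
    have h' : (M - x) / (M-1) * 1 + (x-1)/(M-1) * M = x := by
      rw [div_mul_eq_mul_div, div_mul_eq_mul_div, ← add_div, div_eq_iff hd.ne']; ring
    simpa [smul_eq_mul, ha_def, hb_def] using h'
  have hcvx := Real.strictConvexOn_mul_log.2 (Set.mem_Ici.mpr zero_le_one)
    (Set.mem_Ici.mpr (by linarith : (0:ℝ) ≤ M)) (by intro h; linarith [h1.trans hM, h]) ha hb hab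
  rw [hx] at hcvx
  simp only [smul_eq_mul, Real.log_one, mul_zero, mul_one, zero_add] at hcvx
  have : (M - 1) * (x * Real.log x) < (M - 1) * (b * (M * Real.log M)) := by
    nlinarith [hcvx]
  calc (M - 1) * (x * Real.log x) < (M - 1) * (b * (M * Real.log M)) := this
    _ = (x - 1) * (M * Real.log M) := by rw [hb_def]; field_simp; try ring

lemma chordb_le {M x : ℝ} (h1 : 1 ≤ x) (hM : x ≤ M) :
    (M - 1) * (x * Real.logb 2 x) ≤ (x - 1) * (M * Real.logb 2 M) := by
  have h := chord_le h1 hM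
  have h2 : (0:ℝ) < Real.log 2 := Real.log_pos one_lt_two
  simp only [Real.logb]
  rw [show (M - 1) * (x * (Real.log x / Real.log 2)) = ((M-1)*(x*Real.log x))/Real.log 2 by ring,
    show (x - 1) * (M * (Real.log M / Real.log 2)) = ((x-1)*(M*Real.log M))/Real.log 2 by ring]
  gcongr

lemma chordb_lt {M x : ℝ} (h1 : 1 < x) (hM : x < M) :
    (M - 1) * (x * Real.logb 2 x) < (x - 1) * (M * Real.logb 2 M) := by
  have h := chord_lt h1 hM
  have h2 : (0:ℝ) < Real.log 2 := Real.log_pos one_lt_two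
  simp only [Real.logb]
  rw [show (M - 1) * (x * (Real.log x / Real.log 2)) = ((M-1)*(x*Real.log x))/Real.log 2 by ring,
    show (x - 1) * (M * (Real.log M / Real.log 2)) = ((x-1)*(M*Real.log M))/Real.log 2 by ring]
  gcongr

lemma star_iso_of_center {n : ℕ} (hn : 2 ≤ n) (T : SimpleGraph (Fin n))
    (hacyc : T.IsAcyclic) (c : Fin n)
    (hc : ∀ v, v ≠ c → T.Adj c v) :
    Nonempty (T ≃g completeBipartiteGraph (Fin 1) (Fin (n - 1))) := by
  classical
  -- no edges between non-center vertices
  have hnc : ∀ u v : Fin n, u ≠ c → v ≠ c → ¬ T.Adj u v := by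
    intro u v hu hv hadj
    have huv : u ≠ v := hadj.ne
    let p1 : T.Walk u v := SimpleGraph.Walk.cons hadj SimpleGraph.Walk.nil
    have hp1 : p1.IsPath := by
      simp [p1, SimpleGraph.Walk.isPath_def, huv]
    let p2 : T.Walk u v :=
      SimpleGraph.Walk.cons (T.adj_symm (hc u hu)) (SimpleGraph.Walk.cons (hc v hv) SimpleGraph.Walk.nil)
    have hp2 : p2.IsPath := by
      simp [p2, SimpleGraph.Walk.isPath_def, hu, hv, huv, Ne.symm hv]
    have := hacyc.path_unique ⟨p1, hp1⟩ ⟨p2, hp2⟩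
    have hlen := congrArg (fun p : T.Path u v => p.1.length) this
    simp [p1, p2] at hlen
  -- build the equivalence
  have hcard2 : Fintype.card {v : Fin n // v ≠ c} = n - 1 := by
    simp [Fintype.card_subtype_compl]
  let e1 : {v : Fin n // v = c} ≃ Fin 1 := Fintype.equivFinOfCardEq (Fintype.card_subtype_eq c)
  let e2 : {v : Fin n // v ≠ c} ≃ Fin (n - 1) := Fintype.equivFinOfCardEq hcard2
  let e : Fin n ≃ (Fin 1 ⊕ Fin (n - 1)) :=
    (Equiv.sumCompl (· = c)).symm.trans (Equiv.sumCongr e1 e2)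
  have he_pos : ∀ v (h : v = c), e v = Sum.inl (e1 ⟨v, h⟩) := by
    intro v h
    simp only [e, Equiv.trans_apply, Equiv.sumCongr_apply]
    rw [Equiv.sumCompl_symm_apply_of_pos (p := (· = c)) h]
    simp
  have he_neg : ∀ v (h : ¬ v = c), e v = Sum.inr (e2 ⟨v, h⟩) := by
    intro v h
    simp only [e, Equiv.trans_apply, Equiv.sumCongr_apply]
    rw [Equiv.sumCompl_symm_apply_of_neg (p := (· = c)) h]
    simp
  refine ⟨⟨e, ?_⟩⟩
  intro a b
  by_cases ha : a = c <;> by_cases hb : b = c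
  · rw [he_pos a ha, he_pos b hb]
    subst ha; subst hb
    simp
  · rw [he_pos a ha, he_neg b hb]
    subst ha
    simp [hc b hb]
  · rw [he_neg a ha, he_pos b hb]
    subst hb
    simp [T.adj_symm (hc a ha)]
  · rw [he_neg a ha, he_neg b hb]
    simp [hnc a b ha hb]

lemma star_deg {n : ℕ} (hn : 2 ≤ n) (T : SimpleGraph (Fin n)) [DecidableRel T.Adj]
    (e : T ≃g completeBipartiteGraph (Fin 1) (Fin (n - 1))) :
    T.degree (e.symm (Sum.inl 0)) = n - 1 := by
  classical
  have h1 := Fintype.card_congr (e.mapNeighborSet (e.symm (Sum.inl 0)))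
  rw [SimpleGraph.card_neighborSet_eq_degree, SimpleGraph.card_neighborSet_eq_degree] at h1
  rw [h1, RelIso.apply_symm_apply]
  have h2 : (completeBipartiteGraph (Fin 1) (Fin (n - 1))).neighborFinset (Sum.inl 0) =
      Finset.univ.map ⟨Sum.inr, Sum.inr_injective⟩ := by
    ext w
    cases w <;> simp [SimpleGraph.mem_neighborFinset]
  rw [SimpleGraph.degree, h2]
  simp

end Helpers

/-- every tree on `n ≥ 2` vertices satisfies `I_d(T) ≥ 1 + log₂ √(n-1)`,
with equality iff `T` is the star `K_{1,n-1}`. -/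
theorem tree_entropy_lower_bound {n : ℕ} (hn : 2 ≤ n) (T : SimpleGraph (Fin n))
    (hconn : T.Connected) (hacyc : T.IsAcyclic) :
    1 + Real.logb 2 (Real.sqrt ((n - 1 : ℕ) : ℝ)) ≤ degEntropy T ∧
      (degEntropy T = 1 + Real.logb 2 (Real.sqrt ((n - 1 : ℕ) : ℝ)) ↔
        Nonempty (T ≃g completeBipartiteGraph (Fin 1) (Fin (n - 1)))) := by
  classical
  have hT : T.IsTree := ⟨hconn, hacyc⟩
  set m : ℕ := n - 1 with hm_def
  have hm1 : 1 ≤ m := by omega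
  have hnm : n = m + 1 := by omega
  have hmR : (0:ℝ) < (m:ℝ) := by exact_mod_cast hm1
  -- edge count
  have hcard : T.edgeFinset.card = m := by
    have := hT.card_edgeFinset
    simp only [Fintype.card_fin] at this
    omega
  have hE : T.edgeSet.ncard = m := by
    have hco : ((T.edgeFinset : Finset (Sym2 (Fin n))) : Set (Sym2 (Fin n))) = T.edgeSet := by
      simp
    rw [← hco, Set.ncard_coe_finset, hcard]
  have hNS : ∀ v : Fin n, (T.neighborSet v).ncard = T.degree v := by
    intro v
    have hco : ((T.neighborFinset v : Finset (Fin n)) : Set (Fin n)) = T.neighborSet v := by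
      simp [SimpleGraph.neighborFinset_def]
    conv_lhs => rw [← hco]
    rw [Set.ncard_coe_finset]
    rfl
  -- degree bounds
  have hdle : ∀ v, T.degree v ≤ m := by
    intro v
    have := T.degree_lt_card_verts v
    simp only [Fintype.card_fin] at this
    omega
  have hdge : ∀ v, 1 ≤ T.degree v := by
    intro v
    haveI : Nontrivial (Fin n) := Fin.nontrivial_iff_two_le.mpr hn
    obtain ⟨w, hw⟩ := exists_ne v
    obtain ⟨p⟩ := hconn.preconnected v w
    cases p with
    | nil => exact absurd rfl hw
    | cons h q =>
        have : 0 < T.degree v := (T.degree_pos_iff_exists_adj v).mpr ⟨_, h⟩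
        omega
  have hhs : ∑ v, T.degree v = 2 * m := by
    rw [T.sum_degrees_eq_twice_card_edges, hcard]
  set S : ℝ := ∑ v : Fin n, (T.degree v : ℝ) * Real.logb 2 (T.degree v) with hS_def
  -- rewrite entropy
  have hent : degEntropy T = Real.logb 2 (2 * (m:ℝ)) - (1 / (2 * (m:ℝ))) * S := by
    rw [degEntropy, hE, hS_def]
    congr 1
    congr 1
    exact Finset.sum_congr rfl fun v _ => by rw [hNS v]
  have hlogs : Real.logb 2 (Real.sqrt (m:ℝ)) = Real.logb 2 (m:ℝ) / 2 := by
    rw [Real.logb, Real.logb, Real.log_sqrt hmR.le]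
    ring
  have h2m : Real.logb 2 (2 * (m:ℝ)) = 1 + Real.logb 2 (m:ℝ) := by
    rw [Real.logb_mul two_ne_zero hmR.ne', Real.logb_self_eq_one one_lt_two]
  have hsumR : ∑ v : Fin n, (T.degree v : ℝ) = 2 * (m:ℝ) := by
    exact_mod_cast congrArg (fun k : ℕ => (k : ℝ)) hhs
  have hsum_d : ∑ v : Fin n, ((T.degree v : ℝ) - 1) = (m:ℝ) - 1 := by
    rw [Finset.sum_sub_distrib, hsumR]
    simp [Finset.card_univ, hnm]
    push_cast
    ring
  have chord_v : ∀ v : Fin n,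
      ((m:ℝ) - 1) * ((T.degree v : ℝ) * Real.logb 2 (T.degree v)) ≤
        ((T.degree v : ℝ) - 1) * ((m:ℝ) * Real.logb 2 (m:ℝ)) := fun v =>
    chordb_le (by exact_mod_cast hdge v) (by exact_mod_cast hdle v)
  -- key inequality
  have hkey_le : S ≤ (m:ℝ) * Real.logb 2 (m:ℝ) := by
    rcases eq_or_lt_of_le hm1 with h1 | h1
    · have hall : ∀ v, T.degree v = 1 := fun v => le_antisymm (h1 ▸ hdle v) (hdge v)
      rw [hS_def]
      simp [hall, ← h1]
    · have H : ((m:ℝ) - 1) * S ≤ ((m:ℝ) - 1) * ((m:ℝ) * Real.logb 2 (m:ℝ)) :=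
        calc ((m:ℝ) - 1) * S
            = ∑ v : Fin n, ((m:ℝ) - 1) * ((T.degree v : ℝ) * Real.logb 2 (T.degree v)) := by
              rw [hS_def, Finset.mul_sum]
          _ ≤ ∑ v : Fin n, ((T.degree v : ℝ) - 1) * ((m:ℝ) * Real.logb 2 (m:ℝ)) :=
              Finset.sum_le_sum fun v _ => chord_v v
          _ = (∑ v : Fin n, ((T.degree v : ℝ) - 1)) * ((m:ℝ) * Real.logb 2 (m:ℝ)) := by
              rw [Finset.sum_mul]
          _ = ((m:ℝ) - 1) * ((m:ℝ) * Real.logb 2 (m:ℝ)) := by rw [hsum_d]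
      have hml : (1:ℝ) < (m:ℝ) := by exact_mod_cast h1
      exact le_of_mul_le_mul_left H (by linarith)
  -- equality implies a center
  have hkey_eq : S = (m:ℝ) * Real.logb 2 (m:ℝ) → ∃ c, T.degree c = m := by
    intro hSeq
    rcases eq_or_lt_of_le hm1 with h1 | h1
    · refine ⟨⟨0, by omega⟩, ?_⟩
      have h2 := hdle ⟨0, by omega⟩
      have h3 := hdge ⟨0, by omega⟩
      omega
    · by_contra hno
      push_neg at hno
      by_cases hex : ∃ v0, 2 ≤ T.degree v0
      · obtain ⟨v0, hv0⟩ := hex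
        have hml : (1:ℝ) < (m:ℝ) := by exact_mod_cast h1
        have hv0m : T.degree v0 < m := lt_of_le_of_ne (hdle v0) (hno v0)
        have Hlt : ((m:ℝ) - 1) * S < ((m:ℝ) - 1) * ((m:ℝ) * Real.logb 2 (m:ℝ)) :=
          calc ((m:ℝ) - 1) * S
              = ∑ v : Fin n, ((m:ℝ) - 1) * ((T.degree v : ℝ) * Real.logb 2 (T.degree v)) := by
                rw [hS_def, Finset.mul_sum]
            _ < ∑ v : Fin n, ((T.degree v : ℝ) - 1) * ((m:ℝ) * Real.logb 2 (m:ℝ)) :=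
                Finset.sum_lt_sum (fun v _ => chord_v v)
                  ⟨v0, Finset.mem_univ _,
                    chordb_lt (by exact_mod_cast hv0) (by exact_mod_cast hv0m)⟩
            _ = (∑ v : Fin n, ((T.degree v : ℝ) - 1)) * ((m:ℝ) * Real.logb 2 (m:ℝ)) := by
                rw [Finset.sum_mul]
            _ = ((m:ℝ) - 1) * ((m:ℝ) * Real.logb 2 (m:ℝ)) := by rw [hsum_d]
        have : S < (m:ℝ) * Real.logb 2 (m:ℝ) := lt_of_mul_lt_mul_left Hlt (by linarith)
        linarith [hSeq.ge]
      · push_neg at hex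
        have hall : ∀ v, T.degree v = 1 := fun v => by have := hdge v; have := hex v; omega
        have : ∑ v : Fin n, T.degree v = n := by
          simp [hall]
        omega
  -- center implies leaves elsewhere
  have hleaves : ∀ c : Fin n, T.degree c = m → ∀ v ∈ Finset.univ.erase c, T.degree v = 1 := by
    intro c hc
    have hsume : ∑ v ∈ Finset.univ.erase c, T.degree v = m := by
      have h := Finset.add_sum_erase Finset.univ (fun v => T.degree v) (Finset.mem_univ c)
      rw [hhs, hc] at h
      omega
    have hcarde : (Finset.univ.erase c).card = m := by
      rw [Finset.card_erase_of_mem (Finset.mem_univ c), Finset.card_univ, Fintype.card_fin]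
    have h1 : ∑ v ∈ Finset.univ.erase c, (1:ℕ) = ∑ v ∈ Finset.univ.erase c, T.degree v := by
      rw [hsume, Finset.sum_const, smul_eq_mul, mul_one, hcarde]
    have := (Finset.sum_eq_sum_iff_of_le (fun v _ => hdge v)).mp h1
    exact fun v hv => (this v hv).symm
  have hS_of_center : ∀ c : Fin n, T.degree c = m → S = (m:ℝ) * Real.logb 2 (m:ℝ) := by
    intro c hc
    rw [hS_def, ← Finset.add_sum_erase Finset.univ _ (Finset.mem_univ c), hc]
    have hz : ∑ v ∈ Finset.univ.erase c, (T.degree v : ℝ) * Real.logb 2 (T.degree v) = 0 :=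
      Finset.sum_eq_zero fun v hv => by rw [hleaves c hc v hv]; simp
    rw [hz, add_zero]
  -- center implies iso
  have hc_adj : ∀ c : Fin n, T.degree c = m → ∀ v, v ≠ c → T.Adj c v := by
    intro c hc v hv
    have hsub : T.neighborFinset c ⊆ Finset.univ.erase c := fun w hw =>
      Finset.mem_erase.mpr ⟨(T.mem_neighborFinset c w |>.mp hw).ne', Finset.mem_univ w⟩
    have hcarde : (Finset.univ.erase c).card = m := by
      rw [Finset.card_erase_of_mem (Finset.mem_univ c), Finset.card_univ, Fintype.card_fin]
    have heq : T.neighborFinset c = Finset.univ.erase c :=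
      Finset.eq_of_subset_of_card_le hsub (by rw [hcarde]; rw [← hc]; rfl)
    have : v ∈ T.neighborFinset c := by
      rw [heq]
      exact Finset.mem_erase.mpr ⟨hv, Finset.mem_univ v⟩
    exact (T.mem_neighborFinset c v).mp this
  -- main identity
  have hid : degEntropy T - (1 + Real.logb 2 (Real.sqrt (m:ℝ))) =
      ((m:ℝ) * Real.logb 2 (m:ℝ) - S) / (2 * (m:ℝ)) := by
    rw [hent, hlogs, h2m]
    field_simp
    ring
  constructor
  · have h0 : 0 ≤ ((m:ℝ) * Real.logb 2 (m:ℝ) - S) / (2 * (m:ℝ)) :=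
      div_nonneg (by linarith [hkey_le]) (by linarith)
    linarith [hid]
  · constructor
    · intro heq
      have hS0 : S = (m:ℝ) * Real.logb 2 (m:ℝ) := by
        have : ((m:ℝ) * Real.logb 2 (m:ℝ) - S) / (2 * (m:ℝ)) = 0 := by linarith [hid]
        have h2 : (m:ℝ) * Real.logb 2 (m:ℝ) - S = 0 := by
          field_simp at this
          linarith [this]
        linarith
      obtain ⟨c, hc⟩ := hkey_eq hS0
      exact star_iso_of_center hn T hacyc c (hc_adj c hc)
    · rintro ⟨e⟩
      have hdc : T.degree (e.symm (Sum.inl 0)) = m := star_deg hn T e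
      have hS0 := hS_of_center _ hdc
      have hz : degEntropy T - (1 + Real.logb 2 (Real.sqrt (m:ℝ))) = 0 := by
        rw [hid, hS0]
        simp
      linarith [hz]
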